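/- arXiv:1001.3269 — 2 statements merged into one kernel-verified Lean document; each statement's English description precedes it below -/
import Mathlib

section
/- Let 𝒯(𝒩) be a continuous nest algebra and 𝔏 a norm closed Lie ideal of 𝒯(𝒩). The homomorphism P ↦ P′ on 𝒩 defined by P′ = ⋁{P_y ∈ 𝒩 : x⊗y ∈ 𝔏 and P̂_x < P} is left order continuous: for every subset ℳ ⊆ 𝒩, (⋁ℳ)′ = ⋁{P′ : P ∈ ℳ}. -/
noncomputable section

variable {E : Type*} [NormedAddCommGroup E] [InnerProductSpace ℂ E]

/-- The rank one operator `x ⊗ y : u ↦ ⟨u,x⟩y` (inner product linear in `u`). -/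
def rankOne (x y : E) : E →L[ℂ] E := (innerSL ℂ x).smulRight y

/-- Order on projections: `P ≤ Q` iff `Q ∘ P = P`. -/
def projLE (P Q : E →L[ℂ] E) : Prop := Q.comp P = P

def projLT (P Q : E →L[ℂ] E) : Prop := projLE P Q ∧ P ≠ Q

/-- An orthogonal projection: idempotent and self-adjoint. -/
def IsProjOp (P : E →L[ℂ] E) : Prop :=
  P * P = P ∧ ∀ x y : E, (inner ℂ (P x) y : ℂ) = inner ℂ x (P y)

/-- A nest: a totally ordered family of orthogonal projections containing `0` and `I`. -/
structure IsNest (N : Set (E →L[ℂ] E)) : Prop where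
  proj : ∀ P ∈ N, IsProjOp P
  total : ∀ P ∈ N, ∀ Q ∈ N, projLE P Q ∨ projLE Q P
  zero_mem : (0 : E →L[ℂ] E) ∈ N
  one_mem : (1 : E →L[ℂ] E) ∈ N

/-- `S` is the supremum in `N` of the subset `M`. -/
def IsSupIn (N M : Set (E →L[ℂ] E)) (S : E →L[ℂ] E) : Prop :=
  S ∈ N ∧ (∀ P ∈ M, projLE P S) ∧ ∀ Q ∈ N, (∀ P ∈ M, projLE P Q) → projLE S Q

/-- `S` is the infimum in `N` of the subset `M`. -/
def IsInfIn (N M : Set (E →L[ℂ] E)) (S : E →L[ℂ] E) : Prop :=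
  S ∈ N ∧ (∀ P ∈ M, projLE S P) ∧ ∀ Q ∈ N, (∀ P ∈ M, projLE Q P) → projLE Q S

/-- A complete nest: every subset has a supremum and an infimum in the nest. -/
structure IsCompleteNest (N : Set (E →L[ℂ] E)) extends IsNest N : Prop where
  exists_sup : ∀ M ⊆ N, ∃ S, IsSupIn N M S
  exists_inf : ∀ M ⊆ N, ∃ S, IsInfIn N M S

/-- A continuous nest: `P₋ = P` for every `P` in the nest. -/
def IsContinuousNest (N : Set (E →L[ℂ] E)) : Prop :=
  IsCompleteNest N ∧ ∀ P ∈ N, P ≠ 0 → IsSupIn N {Q | Q ∈ N ∧ projLT Q P} P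

/-- The nest algebra of `N`. -/
def nestAlg (N : Set (E →L[ℂ] E)) : Set (E →L[ℂ] E) :=
  {T | ∀ P ∈ N, (1 - P) * T * P = 0}

/-- A norm closed Lie ideal of the nest algebra. -/
def IsLieIdeal (N L : Set (E →L[ℂ] E)) : Prop :=
  L ⊆ nestAlg N ∧ IsClosed L ∧ (0 : E →L[ℂ] E) ∈ L ∧
    (∀ S ∈ L, ∀ T ∈ L, S + T ∈ L) ∧ (∀ c : ℂ, ∀ S ∈ L, c • S ∈ L) ∧
    (∀ S ∈ L, ∀ T ∈ nestAlg N, S * T - T * S ∈ L)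

/-- `{Q ∈ N : Q z = z}`; its infimum in `N` is `P_z`. -/
def fixSet (N : Set (E →L[ℂ] E)) (z : E) : Set (E →L[ℂ] E) := {Q | Q ∈ N ∧ Q z = z}

/-- `{Q ∈ N : Q z = 0}`; its supremum in `N` is `P̂_z`. -/
def killSet (N : Set (E →L[ℂ] E)) (z : E) : Set (E →L[ℂ] E) := {Q | Q ∈ N ∧ Q z = 0}

/-- `{P_y : x⊗y ∈ L ∧ P̂_x < P}`; its supremum in `N` is `P′`. -/
def primeSet (N L : Set (E →L[ℂ] E)) (P : E →L[ℂ] E) : Set (E →L[ℂ] E) :=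
  {R | ∃ x y : E, x ≠ 0 ∧ y ≠ 0 ∧ rankOne x y ∈ L ∧ IsInfIn N (fixSet N y) R ∧
    ∃ Px, IsSupIn N (killSet N x) Px ∧ projLT Px P}

end

section Aux

variable {E : Type*} [NormedAddCommGroup E] [InnerProductSpace ℂ E]

lemma projLE_refl' {P : E →L[ℂ] E} (hP : IsProjOp P) : projLE P P := hP.1

lemma projLE_trans' {P Q R : E →L[ℂ] E} (h1 : projLE P Q) (h2 : projLE Q R) :
    projLE P R := by
  unfold projLE at *
  calc R.comp P = R.comp (Q.comp P) := by rw [h1]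
    _ = (R.comp Q).comp P := by rw [ContinuousLinearMap.comp_assoc]
    _ = Q.comp P := by rw [h2]
    _ = P := h1

lemma projLE_antisymm' [CompleteSpace E] {P Q : E →L[ℂ] E} (hP : IsProjOp P)
    (hQ : IsProjOp Q) (h1 : projLE P Q) (h2 : projLE Q P) : P = Q := by
  ext u
  apply ext_inner_right ℂ
  intro v
  have hPu : Q (P u) = P u := by
    rw [← ContinuousLinearMap.comp_apply, h1]
  have hQv : P (Q v) = Q v := by
    rw [← ContinuousLinearMap.comp_apply, h2]
  calc (inner ℂ (P u) v : ℂ) = inner ℂ (Q (P u)) v := by rw [hPu]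
    _ = inner ℂ (P u) (Q v) := hQ.2 _ _
    _ = inner ℂ u (P (Q v)) := hP.2 _ _
    _ = inner ℂ u (Q v) := by rw [hQv]
    _ = inner ℂ (Q u) v := (hQ.2 _ _).symm

end Aux

/-- Proposition 4.1 (second part): the homomorphism `P ↦ P′` is left order continuous:
`(⋁ℳ)′ = ⋁{P′ : P ∈ ℳ}` for every `ℳ ⊆ 𝒩`. -/
theorem prime_map_left_order_continuous {E : Type*} [NormedAddCommGroup E] [InnerProductSpace ℂ E] [CompleteSpace E]
    {N L : Set (E →L[ℂ] E)} (hN : IsContinuousNest N) (hL : IsLieIdeal N L)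
    (φ : (E →L[ℂ] E) → E →L[ℂ] E)
    (hφ : ∀ P ∈ N, IsSupIn N (primeSet N L P) (φ P))
    (M : Set (E →L[ℂ] E)) (hM : M ⊆ N) (S : E →L[ℂ] E) (hS : IsSupIn N M S) :
    IsSupIn N (φ '' M) (φ S) := by
  have hnest := hN.1.toIsNest
  have hSN : S ∈ N := hS.1
  have hφS := hφ S hSN
  refine ⟨hφS.1, ?_, ?_⟩
  · -- upper bound
    rintro _ ⟨P, hPM, rfl⟩
    have hPN : P ∈ N := hM hPM
    apply (hφ P hPN).2.2 (φ S) hφS.1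
    intro R hR
    apply hφS.2.1
    obtain ⟨x, y, hx, hy, hxy, hRinf, Px, hPx, hlt⟩ := hR
    refine ⟨x, y, hx, hy, hxy, hRinf, Px, hPx, ?_, ?_⟩
    · exact projLE_trans' hlt.1 (hS.2.1 P hPM)
    · rintro rfl
      have hPS : projLE P Px := hS.2.1 P hPM
      exact hlt.2 (projLE_antisymm' (hnest.proj _ hPx.1) (hnest.proj _ hPN)
        hlt.1 hPS)
  · -- least upper bound
    intro Q hQ hub
    apply hφS.2.2 Q hQ
    intro R hR
    obtain ⟨x, y, hx, hy, hxy, hRinf, Px, hPx, hlt⟩ := hR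
    have hPxN : Px ∈ N := hPx.1
    -- find P ∈ M with Px < P
    have hex : ∃ P ∈ M, ¬ projLE P Px := by
      by_contra h
      push_neg at h
      have hSPx : projLE S Px := hS.2.2 Px hPxN h
      exact hlt.2 (projLE_antisymm' (hnest.proj _ hPxN) (hnest.proj _ hSN)
        hlt.1 hSPx)
    obtain ⟨P, hPM, hnle⟩ := hex
    have hPN : P ∈ N := hM hPM
    have hPxP : projLE Px P := by
      rcases hnest.total P hPN Px hPxN with h | h
      · exact absurd h hnle
      · exact h
    have hne : Px ≠ P := by
      rintro rfl
      exact hnle (projLE_refl' (hnest.proj _ hPxN))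
    have hRmem : R ∈ primeSet N L P :=
      ⟨x, y, hx, hy, hxy, hRinf, Px, hPx, hPxP, hne⟩
    have h1 : projLE R (φ P) := (hφ P hPN).2.1 R hRmem
    have h2 : projLE (φ P) Q := hub (φ P) ⟨P, hPM, rfl⟩
    exact projLE_trans' h1 h2
end

section
/- Let 𝒩 be a nest and φ : 𝒩 → 𝒩 an order preserving map. Then the set 𝔅 = {S ∈ 𝒯(𝒩) : φ(P)⊥ S P = 0 for all P ∈ 𝒩} is a norm closed two-sided (associative) ideal of the nest algebra 𝒯(𝒩). -/
noncomputable section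

variable {E : Type*} [NormedAddCommGroup E] [InnerProductSpace ℂ E]

private lemma cancel_aux {R : Type*} [Ring R] {A X : R} (h : (1 - A) * X = 0) : A * X = X := by
  rw [sub_mul, one_mul, sub_eq_zero] at h
  exact h.symm

private lemma left_mul_aux {R : Type*} [Ring R] {A T S P : R}
    (hT : (1 - A) * T * A = 0) (hS : (1 - A) * S * P = 0) :
    (1 - A) * (T * S) * P = 0 := by
  have h1 : A * (S * P) = S * P := cancel_aux (by rw [← mul_assoc]; exact hS)
  calc (1 - A) * (T * S) * P = (1 - A) * T * (S * P) := by noncomm_ring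
    _ = (1 - A) * T * (A * (S * P)) := by rw [h1]
    _ = ((1 - A) * T * A) * (S * P) := by noncomm_ring
    _ = 0 := by rw [hT, zero_mul]

private lemma right_mul_aux {R : Type*} [Ring R] {A S T P : R}
    (hT : (1 - P) * T * P = 0) (hS : (1 - A) * S * P = 0) :
    (1 - A) * (S * T) * P = 0 := by
  have h1 : P * (T * P) = T * P := cancel_aux (by rw [← mul_assoc]; exact hT)
  calc (1 - A) * (S * T) * P = (1 - A) * S * (T * P) := by noncomm_ring
    _ = (1 - A) * S * (P * (T * P)) := by rw [h1]
    _ = ((1 - A) * S * P) * (T * P) := by noncomm_ring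
    _ = 0 := by rw [hS, zero_mul]

end
/-- The set `𝔅 = {S ∈ 𝒯(𝒩) : φ(P)⊥ S P = 0 ∀ P ∈ 𝒩}` associated to an order
homomorphism `φ` on the nest is a norm closed two-sided ideal of the nest algebra. -/
theorem prime_condition_assoc_ideal {E : Type*} [NormedAddCommGroup E] [InnerProductSpace ℂ E] [CompleteSpace E]
    {N : Set (E →L[ℂ] E)} (hN : IsCompleteNest N)
    (φ : (E →L[ℂ] E) → E →L[ℂ] E) (hmem : ∀ P ∈ N, φ P ∈ N)
    (hmono : ∀ P ∈ N, ∀ Q ∈ N, projLE P Q → projLE (φ P) (φ Q)) :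
    IsClosed {S : E →L[ℂ] E | S ∈ nestAlg N ∧ ∀ P ∈ N, (1 - φ P) * S * P = 0} ∧
    (0 : E →L[ℂ] E) ∈ {S | S ∈ nestAlg N ∧ ∀ P ∈ N, (1 - φ P) * S * P = 0} ∧
    (∀ S ∈ {S : E →L[ℂ] E | S ∈ nestAlg N ∧ ∀ P ∈ N, (1 - φ P) * S * P = 0},
      ∀ S' ∈ {S : E →L[ℂ] E | S ∈ nestAlg N ∧ ∀ P ∈ N, (1 - φ P) * S * P = 0},
        S + S' ∈ {S : E →L[ℂ] E | S ∈ nestAlg N ∧ ∀ P ∈ N, (1 - φ P) * S * P = 0}) ∧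
    (∀ c : ℂ, ∀ S ∈ {S : E →L[ℂ] E | S ∈ nestAlg N ∧ ∀ P ∈ N, (1 - φ P) * S * P = 0},
        c • S ∈ {S : E →L[ℂ] E | S ∈ nestAlg N ∧ ∀ P ∈ N, (1 - φ P) * S * P = 0}) ∧
    (∀ T ∈ nestAlg N, ∀ S ∈ {S : E →L[ℂ] E | S ∈ nestAlg N ∧ ∀ P ∈ N, (1 - φ P) * S * P = 0},
        T * S ∈ {S : E →L[ℂ] E | S ∈ nestAlg N ∧ ∀ P ∈ N, (1 - φ P) * S * P = 0} ∧
        S * T ∈ {S : E →L[ℂ] E | S ∈ nestAlg N ∧ ∀ P ∈ N, (1 - φ P) * S * P = 0}) := by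
  have hc : ∀ A B : E →L[ℂ] E, IsClosed {S : E →L[ℂ] E | A * S * B = 0} := fun A B =>
    isClosed_eq ((continuous_const.mul continuous_id).mul continuous_const) continuous_const
  refine ⟨?_, ⟨?_, ?_⟩, ?_, ?_, ?_⟩
  · have : {S : E →L[ℂ] E | S ∈ nestAlg N ∧ ∀ P ∈ N, (1 - φ P) * S * P = 0} =
        (⋂ P ∈ N, {S : E →L[ℂ] E | (1 - P) * S * P = 0}) ∩
        (⋂ P ∈ N, {S : E →L[ℂ] E | (1 - φ P) * S * P = 0}) := by
      ext S
      simp [nestAlg, Set.mem_iInter]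
    rw [this]
    exact ((isClosed_biInter fun P _ => hc _ _).inter (isClosed_biInter fun P _ => hc _ _))
  · intro P hP; simp
  · intro P hP; simp
  · rintro S ⟨hS1, hS2⟩ S' ⟨hS'1, hS'2⟩
    refine ⟨fun P hP => ?_, fun P hP => ?_⟩
    · have := hS1 P hP; have := hS'1 P hP
      rw [mul_add, add_mul, hS1 P hP, hS'1 P hP, add_zero]
    · rw [mul_add, add_mul, hS2 P hP, hS'2 P hP, add_zero]
  · rintro c S ⟨hS1, hS2⟩
    refine ⟨fun P hP => ?_, fun P hP => ?_⟩
    · rw [mul_smul_comm, smul_mul_assoc, hS1 P hP, smul_zero]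
    · rw [mul_smul_comm, smul_mul_assoc, hS2 P hP, smul_zero]
  · rintro T hT S ⟨hS1, hS2⟩
    refine ⟨⟨fun P hP => ?_, fun P hP => ?_⟩, ⟨fun P hP => ?_, fun P hP => ?_⟩⟩
    · exact left_mul_aux (hT P hP) (hS1 P hP)
    · exact left_mul_aux (hT (φ P) (hmem P hP)) (hS2 P hP)
    · exact right_mul_aux (hT P hP) (hS1 P hP)
    · exact right_mul_aux (hT P hP) (hS2 P hP)
end
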